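/- Let λ > 0 and β > 0 with 2λβ² ≥ 1. Then for u ≥ 0, there exists a ≥ 0 satisfying the transformed-ℓ¹ stationarity equation a + λβ/(1 + βa)² = u if and only if u ≥ 3·(λ/(4β))^{1/3} − 1/β. -/

import Mathlib

/-- For `λ > 0` and `β > 0` with `2λβ² ≥ 1`, and for any input
`u ≥ 0`, the transformed-ℓ¹ stationarity equation `a + λβ/(1 + βa)² = u` has a
nonnegative solution `a` if and only if `u ≥ 3(λ/(4β))^{1/3} − 1/β`. -/
theorem transformed_l1_solvability (lam β : ℝ) (hlam : 0 < lam) (hβ : 0 < β)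
    (hcond : 1 ≤ 2 * lam * β^2) :
    ∀ u : ℝ, 0 ≤ u →
      ((∃ a : ℝ, 0 ≤ a ∧ a + lam * β / (1 + β * a)^2 = u) ↔
        3 * (lam / (4 * β)) ^ ((1:ℝ)/3) - 1/β ≤ u) := by
  intro u hu
  set t : ℝ := (2 * lam * β^2) ^ ((1:ℝ)/3) with ht
  have hbase : (0:ℝ) < 2 * lam * β^2 := by positivity
  have ht0 : 0 < t := Real.rpow_pos_of_pos hbase _
  have ht3 : t^3 = 2 * lam * β^2 := by
    rw [ht, ← Real.rpow_natCast _ 3, ← Real.rpow_mul hbase.le]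
    norm_num
  have ht1 : 1 ≤ t := by nlinarith [sq_nonneg (t - 1), sq_nonneg (t + 1)]
  -- rewrite the cube root expression
  have hx : (t / (2*β))^(3:ℕ) = lam / (4*β) := by
    field_simp
    linear_combination 4 * ht3
  have hM : 3 * (lam / (4 * β)) ^ ((1:ℝ)/3) - 1/β = (3*t - 2) / (2*β) := by
    rw [← hx, ← Real.rpow_natCast (t/(2*β)) 3, ← Real.rpow_mul (by positivity)]
    norm_num
    field_simp
  rw [hM]
  constructor
  · rintro ⟨a, ha, heq⟩
    set s : ℝ := 1 + β * a with hsdef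
    have hs : 0 < s := by positivity
    have hs1 : 1 ≤ s := by nlinarith
    have hu2 : a * s^2 + lam * β = u * s^2 := by
      field_simp at heq
      linarith [heq]
    have hkey : 3*t - 2 ≤ u * (2*β) := by
      nlinarith [mul_nonneg (sq_nonneg (s - t)) (by linarith : (0:ℝ) ≤ 2*s + t),
        sq_nonneg s, mul_pos hs hs, hu2]
    rw [div_le_iff₀ (by positivity)]
    linarith
  · intro hle
    set astar : ℝ := (t - 1) / β with hastar
    have hast0 : 0 ≤ astar := div_nonneg (by linarith) hβ.le
    have hstar : 1 + β * astar = t := by rw [hastar]; field_simp; ring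
    have hfstar : astar + lam * β / (1 + β * astar)^2 = (3*t - 2)/(2*β) := by
      rw [hstar, hastar]
      field_simp
      nlinarith [ht3]
    have hau : astar ≤ u := by
      have : (t-1)/β ≤ (3*t-2)/(2*β) := by
        rw [div_le_div_iff₀ hβ (by positivity)]
        nlinarith
      calc astar ≤ (3*t-2)/(2*β) := this
        _ ≤ u := hle
    have hcont : ContinuousOn (fun x : ℝ => x + lam * β / (1 + β * x)^2)
        (Set.Icc astar u) := by
      apply ContinuousOn.add continuousOn_id
      apply ContinuousOn.div continuousOn_const (by fun_prop)
      intro x hx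
      have : 0 ≤ x := le_trans hast0 hx.1
      positivity
    have hIVT := intermediate_value_Icc hau hcont
    have hmem : u ∈ Set.Icc ((fun x : ℝ => x + lam * β / (1 + β * x)^2) astar)
        ((fun x : ℝ => x + lam * β / (1 + β * x)^2) u) := by
      constructor
      · simpa [hfstar] using hle
      · simp only
        nlinarith [div_pos (mul_pos hlam hβ) (by positivity : (0:ℝ) < (1 + β*u)^2)]
    obtain ⟨a, haIcc, hfa⟩ := hIVT hmem
    exact ⟨a, le_trans hast0 haIcc.1, hfa⟩
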